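/- Let G₁ and G₂ be finitely generated groups with the same finite quotients, i.e. for every finite group Q there is a surjective homomorphism G₁ → Q if and only if there is a surjective homomorphism G₂ → Q. Then the profinite completions Ĝ₁ and Ĝ₂ are isomorphic as topological groups. -/

import Mathlib

universe u v

namespace ProfinitePaper

variable (G : Type u) [Group G]

/-- The finite-index normal subgroups of `G`, indexing the finite quotients. -/
abbrev FinNormal : Type u := {N : Subgroup G // N.Normal ∧ N.FiniteIndex}

variable {G} in
instance (N : FinNormal G) : N.1.Normal := N.2.1

variable {G} in
instance (N : FinNormal G) : N.1.FiniteIndex := N.2.2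

/-- Each finite quotient carries the discrete topology. -/
instance (N : FinNormal G) : TopologicalSpace (G ⧸ N.1) := ⊥

instance (N : FinNormal G) : DiscreteTopology (G ⧸ N.1) := ⟨rfl⟩

instance (N : FinNormal G) : IsTopologicalGroup (G ⧸ N.1) where
  continuous_mul := continuous_of_discreteTopology
  continuous_inv := continuous_of_discreteTopology

/-- The profinite completion of `G`, as the inverse limit (compatible families)
inside the product of all finite quotients of `G`. -/
def profiniteCompletionSubgroup : Subgroup (∀ N : FinNormal G, G ⧸ N.1) where
  carrier := {x | ∀ (N M : FinNormal G) (h : N.1 ≤ M.1),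
    QuotientGroup.map N.1 M.1 (MonoidHom.id G) (fun _ hx => h hx) (x N) = x M}
  one_mem' := fun N M h => by simp
  mul_mem' := fun {x y} hx hy N M h => by
    simp only [Pi.mul_apply, map_mul, hx N M h, hy N M h]
  inv_mem' := fun {x} hx N M h => by
    simp only [Pi.inv_apply, map_inv, hx N M h]

/-- The profinite completion `Ĝ` of `G`, regarded as a topological group: it is the
inverse limit of the discrete finite quotients `G/N`, a compact, Hausdorff, totally
disconnected topological group (with the subspace topology from the product of the
discrete finite quotients). -/
abbrev ProfiniteCompletion : Type u := profiniteCompletionSubgroup G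

/-- The canonical homomorphism `ι : G → Ĝ`, induced by the quotient maps `G → G/N`. -/
def iota : G →* ProfiniteCompletion G :=
  MonoidHom.codRestrict (Pi.monoidHom fun N : FinNormal G => QuotientGroup.mk' N.1)
    (profiniteCompletionSubgroup G)
    (fun g N M h => by first | rfl | exact QuotientGroup.map_mk _ _ _ _ _)

open Subgroup


variable {G : Type u} [Group G] {H : Type v} [Group H]

/-- Normal subgroups of finite index at most `n`. -/
def nrm (G : Type*) [Group G] (n : ℕ) : Set (Subgroup G) :=
  {N | N.Normal ∧ N.FiniteIndex ∧ N.index ≤ n}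

/-- The intersection of all normal subgroups of index at most `n`. -/
def KK (G : Type*) [Group G] (n : ℕ) : Subgroup G := sInf (nrm G n)

lemma KK_le {n : ℕ} {N : Subgroup G} (h : N ∈ nrm G n) : KK G n ≤ N := sInf_le h

lemma KK_mono {m n : ℕ} (h : m ≤ n) : KK G n ≤ KK G m :=
  le_sInf fun N hN => sInf_le ⟨hN.1, hN.2.1, hN.2.2.trans h⟩

lemma KK_normal (n : ℕ) : (KK G n).Normal := by
  constructor
  intro x hx g
  rw [KK, mem_sInf] at hx ⊢
  intro N hN
  exact hN.1.conj_mem x (hx N hN) g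

lemma monoidHom_eq_of_eqOn_gen {S : Set G} (hS : Subgroup.closure S = ⊤)
    {M : Type*} [Group M] {f g : G →* M} (h : ∀ s ∈ S, f s = g s) : f = g := by
  ext x
  have hx : x ∈ Subgroup.closure S := hS ▸ Subgroup.mem_top x
  induction hx using Subgroup.closure_induction with
  | mem s hs => exact h s hs
  | one => simp
  | mul a b _ _ ha hb => simp [ha, hb]
  | inv a _ ha => simp [ha]

lemma finite_monoidHom (hfg : Group.FG G) (M : Type*) [Group M] [Finite M] :
    Finite (G →* M) := by
  obtain ⟨S, hS, hSfin⟩ := (Subgroup.fg_iff _).mp hfg.out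
  haveI : Finite ↑S := hSfin.to_subtype
  refine Finite.of_injective (fun f => (fun s : S => f s.1)) ?_
  intro f g hfg'
  exact monoidHom_eq_of_eqOn_gen hS fun s hs => congrFun hfg' ⟨s, hs⟩

section Enc

/-- A chosen embedding of the (finite) coset space into `Fin n`. -/
noncomputable def encEmb (n : ℕ) (N : Subgroup G) [N.FiniteIndex] (hN : N.index ≤ n) :
    (G ⧸ N) ↪ Fin n :=
  letI : Fintype (G ⧸ N) := N.fintypeQuotientOfFiniteIndex
  (Function.Embedding.nonempty_of_card_le (α := G ⧸ N) (β := Fin n)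
    (by rw [← Nat.card_eq_fintype_card, ← Subgroup.index_eq_card, Fintype.card_fin]
        exact hN)).some

/-- Encoding of a bounded-index subgroup: a permutation representation on `Fin n`
together with a base point, from which the subgroup can be recovered. -/
noncomputable def encN (n : ℕ) (N : Subgroup G) [N.FiniteIndex] (hN : N.index ≤ n) :
    (G →* Equiv.Perm (Fin n)) × Fin n :=
  ((Equiv.Perm.viaEmbeddingHom (encEmb n N hN)).comp (MulAction.toPermHom G (G ⧸ N)),
    encEmb n N hN (QuotientGroup.mk 1))

lemma encN_mem_iff (n : ℕ) (N : Subgroup G) [N.FiniteIndex] (hN : N.index ≤ n) (g : G) :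
    g ∈ N ↔ (encN n N hN).1 g (encN n N hN).2 = (encN n N hN).2 := by
  simp only [encN, MonoidHom.comp_apply, Equiv.Perm.viaEmbeddingHom_apply]
  rw [Equiv.Perm.viaEmbedding_apply]
  have h1 : (MulAction.toPermHom G (G ⧸ N)) g (QuotientGroup.mk 1) = QuotientGroup.mk g := by
    simp only [MulAction.toPermHom_apply, MulAction.toPerm_apply]
    rw [MulAction.Quotient.smul_mk]
    simp
  rw [h1, (encEmb n N hN).apply_eq_iff_eq, QuotientGroup.eq]
  simp

lemma nrm_finite (hfg : Group.FG G) (n : ℕ) : (nrm G n).Finite := by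
  rw [← Set.finite_coe_iff]
  haveI : Finite (G →* Equiv.Perm (Fin n)) := finite_monoidHom hfg (Equiv.Perm (Fin n))
  refine Finite.of_injective
    (fun N : nrm G n => @encN G _ n N.1 N.2.2.1 N.2.2.2) ?_
  intro N₁ N₂ h
  refine Subtype.ext (Subgroup.ext fun g => ?_)
  rw [@encN_mem_iff G _ n N₁.1 N₁.2.2.1 N₁.2.2.2 g,
    @encN_mem_iff G _ n N₂.1 N₂.2.2.1 N₂.2.2.2 g]
  have h1 := congrArg Prod.fst h
  have h2 := congrArg Prod.snd h
  simp only at h1 h2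
  rw [h1, h2]

end Enc

lemma KK_finiteIndex (hfg : Group.FG G) (n : ℕ) : (KK G n).FiniteIndex := by
  haveI : Finite (nrm G n) := (nrm_finite hfg n).to_subtype
  rw [KK, sInf_eq_iInf']
  exact Subgroup.finiteIndex_iInf fun N => N.2.2.1

section Correspondence

variable {G₁ : Type u} {G₂ : Type v} [Group G₁] [Group G₂]

lemma comap_KK_le (f : G₁ →* G₂) (hf : Function.Surjective f) (m : ℕ) :
    KK G₁ m ≤ (KK G₂ m).comap f := by
  intro x hx
  rw [Subgroup.mem_comap, KK, Subgroup.mem_sInf]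
  intro M hM
  have hc : M.comap f ∈ nrm G₁ m := by
    refine ⟨hM.1.comap f, ⟨?_⟩, ?_⟩
    · rw [Subgroup.index_comap_of_surjective _ hf]; exact hM.2.1.index_ne_zero
    · rw [Subgroup.index_comap_of_surjective _ hf]; exact hM.2.2
  exact KK_le hc hx

lemma comap_KK_eq {f : G₁ →* G₂} (hf : Function.Surjective f) {m : ℕ}
    (hker : f.ker ≤ KK G₁ m) : (KK G₂ m).comap f = KK G₁ m := by
  refine le_antisymm (le_sInf fun N hN => ?_) (comap_KK_le f hf m)
  have hmap : N.map f ∈ nrm G₂ m := by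
    refine ⟨hN.1.map f hf, ⟨?_⟩, ?_⟩
    · rw [N.index_map_eq hf (hker.trans (KK_le hN))]; exact hN.2.1.index_ne_zero
    · rw [N.index_map_eq hf (hker.trans (KK_le hN))]; exact hN.2.2
  calc (KK G₂ m).comap f ≤ (N.map f).comap f := Subgroup.comap_mono (KK_le hmap)
    _ = N ⊔ f.ker := Subgroup.comap_map_eq f N
    _ = N := sup_eq_left.mpr (hker.trans (KK_le hN))

lemma map_KK_eq {f : G₁ →* G₂} (hf : Function.Surjective f) {m : ℕ}
    (hker : f.ker ≤ KK G₁ m) : (KK G₁ m).map f = KK G₂ m := by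
  rw [← comap_KK_eq hf hker, Subgroup.map_comap_eq_self_of_surjective hf]

end Correspondence

section QuotLevel

variable {G : Type u} [Group G]

instance KKnormal (n : ℕ) : (KK G n).Normal := KK_normal n

lemma ker_mkKK (n : ℕ) : (QuotientGroup.mk' (KK G n)).ker = KK G n :=
  QuotientGroup.ker_mk' _

lemma map_KK_quot {m n : ℕ} (h : m ≤ n) :
    (KK G m).map (QuotientGroup.mk' (KK G n)) = KK (G ⧸ KK G n) m :=
  map_KK_eq (QuotientGroup.mk'_surjective _) (by rw [ker_mkKK]; exact KK_mono h)

lemma KK_quot_self_eq_bot (n : ℕ) : KK (G ⧸ KK G n) n = ⊥ := by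
  rw [← map_KK_quot (le_refl n)]
  refine le_antisymm ?_ bot_le
  rintro x ⟨g, hg, rfl⟩
  simp only [Subgroup.mem_bot, QuotientGroup.mk'_apply]
  exact (QuotientGroup.eq_one_iff g).mpr hg

end QuotLevel
section Levels

variable {G : Type u} [Group G]

/-- Projection between levels of the tower `G ⧸ KK G n`. -/
def projK {m n : ℕ} (h : m ≤ n) : (G ⧸ KK G n) →* G ⧸ KK G m :=
  QuotientGroup.map _ _ (MonoidHom.id G) (fun x hx => KK_mono h hx)

lemma projK_mk {m n : ℕ} (h : m ≤ n) (g : G) :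
    projK h (g : G ⧸ KK G n) = (g : G ⧸ KK G m) :=
  QuotientGroup.map_mk _ _ _ _ g

lemma projK_surjective {m n : ℕ} (h : m ≤ n) :
    Function.Surjective (projK (G := G) h) := by
  intro y
  obtain ⟨g, rfl⟩ := QuotientGroup.mk_surjective y
  exact ⟨g, projK_mk h g⟩

end Levels

section LevelIso

variable {G₁ G₂ : Type u} [Group G₁] [Group G₂]

lemma exists_surj_hom_quot
    (hsame : ∀ (Q : Type u) [Group Q] [Finite Q],
      (∃ f : G₁ →* Q, Function.Surjective f) ↔ (∃ f : G₂ →* Q, Function.Surjective f))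
    (hfg₁ : Group.FG G₁) (n : ℕ) :
    ∃ f : (G₂ ⧸ KK G₂ n) →* G₁ ⧸ KK G₁ n, Function.Surjective f := by
  haveI : (KK G₁ n).FiniteIndex := KK_finiteIndex hfg₁ n
  obtain ⟨f, hf⟩ := (hsame (G₁ ⧸ KK G₁ n)).mp
    ⟨QuotientGroup.mk' _, QuotientGroup.mk'_surjective _⟩
  have hker : KK G₂ n ≤ f.ker := by
    have h1 : KK G₂ n ≤ ((KK (G₁ ⧸ KK G₁ n) n).comap f) := comap_KK_le f hf n
    rwa [KK_quot_self_eq_bot, MonoidHom.comap_bot] at h1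
  refine ⟨QuotientGroup.lift (KK G₂ n) f hker, ?_⟩
  intro y
  obtain ⟨g, rfl⟩ := hf y
  exact ⟨QuotientGroup.mk g, by rw [QuotientGroup.lift_mk']⟩

lemma exists_level_iso
    (hsame : ∀ (Q : Type u) [Group Q] [Finite Q],
      (∃ f : G₁ →* Q, Function.Surjective f) ↔ (∃ f : G₂ →* Q, Function.Surjective f))
    (hfg₁ : Group.FG G₁) (hfg₂ : Group.FG G₂) (n : ℕ) :
    Nonempty ((G₁ ⧸ KK G₁ n) ≃* (G₂ ⧸ KK G₂ n)) := by
  haveI : (KK G₁ n).FiniteIndex := KK_finiteIndex hfg₁ n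
  haveI : (KK G₂ n).FiniteIndex := KK_finiteIndex hfg₂ n
  obtain ⟨f, hf⟩ := exists_surj_hom_quot hsame hfg₁ n
  obtain ⟨f', hf'⟩ := exists_surj_hom_quot (G₁ := G₂) (G₂ := G₁)
    (fun Q _ _ => (hsame Q).symm) hfg₂ n
  have hcard : Nat.card (G₂ ⧸ KK G₂ n) = Nat.card (G₁ ⧸ KK G₁ n) :=
    le_antisymm (Nat.card_le_card_of_surjective f' hf')
      (Nat.card_le_card_of_surjective f hf)
  have hbij : Function.Bijective f :=
    (Nat.bijective_iff_surjective_and_card f).mpr ⟨hf, hcard⟩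
  exact ⟨(MulEquiv.ofBijective f hbij).symm⟩

end LevelIso
section Descend

open CategoryTheory

variable {G₁ G₂ : Type u} [Group G₁] [Group G₂]

lemma descend_aux {m n : ℕ} (h : m ≤ n) (φ : (G₁ ⧸ KK G₁ n) ≃* (G₂ ⧸ KK G₂ n)) :
    KK G₁ m ≤ ((projK h).comp (φ.toMonoidHom.comp (QuotientGroup.mk' (KK G₁ n)))).ker := by
  intro g hg
  have h1 : (QuotientGroup.mk g : G₁ ⧸ KK G₁ n) ∈ KK (G₁ ⧸ KK G₁ n) m := by
    rw [← map_KK_quot h]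
    exact ⟨g, hg, rfl⟩
  have hc : (KK (G₂ ⧸ KK G₂ n) m).comap φ.toMonoidHom = KK (G₁ ⧸ KK G₁ n) m :=
    comap_KK_eq φ.surjective (by
      rw [(MonoidHom.ker_eq_bot_iff _).mpr φ.injective]; exact bot_le)
  rw [← hc, Subgroup.mem_comap] at h1
  rw [← map_KK_quot h] at h1
  obtain ⟨y, hy, hy2⟩ := h1
  simp only [MonoidHom.mem_ker, MonoidHom.comp_apply, QuotientGroup.mk'_apply,
    MulEquiv.coe_toMonoidHom] at hy2 ⊢
  rw [← hy2, projK_mk, QuotientGroup.eq_one_iff]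
  exact hy

/-- Transporting a level-`n` isomorphism down to level `m ≤ n`. -/
noncomputable def descend {m n : ℕ} (h : m ≤ n) (φ : (G₁ ⧸ KK G₁ n) ≃* (G₂ ⧸ KK G₂ n)) :
    (G₁ ⧸ KK G₁ m) ≃* (G₂ ⧸ KK G₂ m) := by
  refine MonoidHom.toMulEquiv
    (QuotientGroup.lift (KK G₁ m)
      ((projK h).comp (φ.toMonoidHom.comp (QuotientGroup.mk' (KK G₁ n)))) (descend_aux h φ))
    (QuotientGroup.lift (KK G₂ m)
      ((projK h).comp (φ.symm.toMonoidHom.comp (QuotientGroup.mk' (KK G₂ n))))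
      (descend_aux h φ.symm)) ?_ ?_
  · ext g
    obtain ⟨y, hy⟩ := QuotientGroup.mk_surjective (φ (QuotientGroup.mk g))
    simp only [MonoidHom.comp_apply, MonoidHom.id_apply, QuotientGroup.mk'_apply]
    rw [QuotientGroup.lift_mk']
    simp only [MonoidHom.comp_apply, QuotientGroup.mk'_apply, MulEquiv.coe_toMonoidHom]
    rw [← hy, projK_mk, QuotientGroup.lift_mk']
    simp only [MonoidHom.comp_apply, QuotientGroup.mk'_apply, MulEquiv.coe_toMonoidHom]
    rw [hy, MulEquiv.symm_apply_apply, projK_mk]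
  · ext g
    obtain ⟨y, hy⟩ := QuotientGroup.mk_surjective (φ.symm (QuotientGroup.mk g))
    simp only [MonoidHom.comp_apply, MonoidHom.id_apply, QuotientGroup.mk'_apply]
    rw [QuotientGroup.lift_mk']
    simp only [MonoidHom.comp_apply, QuotientGroup.mk'_apply, MulEquiv.coe_toMonoidHom]
    rw [← hy, projK_mk, QuotientGroup.lift_mk']
    simp only [MonoidHom.comp_apply, QuotientGroup.mk'_apply, MulEquiv.coe_toMonoidHom]
    rw [hy, MulEquiv.apply_symm_apply, projK_mk]

lemma descend_mk {m n : ℕ} (h : m ≤ n) (φ : (G₁ ⧸ KK G₁ n) ≃* (G₂ ⧸ KK G₂ n)) (g : G₁) :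
    descend h φ (QuotientGroup.mk g) = projK h (φ (QuotientGroup.mk g)) := rfl

lemma descend_comm {m n : ℕ} (h : m ≤ n) (φ : (G₁ ⧸ KK G₁ n) ≃* (G₂ ⧸ KK G₂ n))
    (x : G₁ ⧸ KK G₁ n) : descend h φ (projK h x) = projK h (φ x) := by
  induction x using QuotientGroup.induction_on with
  | H g => rw [projK_mk, descend_mk]

variable (G₁ G₂) in
/-- The inverse system of sets of level isomorphisms. -/
noncomputable def levelF : ℕᵒᵖ ⥤ Type u where
  obj n := (G₁ ⧸ KK G₁ n.unop) ≃* (G₂ ⧸ KK G₂ n.unop)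
  map {n m} f := TypeCat.ofHom fun φ => descend (leOfHom f.unop) φ
  map_id n := by
    refine ConcreteCategory.hom_ext _ _ fun φ => ?_
    refine MulEquiv.ext fun x => ?_
    induction x using QuotientGroup.induction_on with
    | H g =>
      obtain ⟨y, hy⟩ := QuotientGroup.mk_surjective (φ (QuotientGroup.mk g))
      simp only [CategoryTheory.types_id_apply]
      show descend (le_refl n.unop) φ _ = _
      rw [descend_mk, ← hy, projK_mk]
  map_comp {n m k} f f' := by
    refine ConcreteCategory.hom_ext _ _ fun φ => ?_
    refine MulEquiv.ext fun x => ?_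
    induction x using QuotientGroup.induction_on with
    | H g =>
      obtain ⟨y, hy⟩ := QuotientGroup.mk_surjective (φ (QuotientGroup.mk g))
      simp only [CategoryTheory.types_comp_apply]
      show descend _ φ _ = descend _ (descend _ φ) _
      rw [descend_mk, descend_mk, descend_mk, ← hy, projK_mk, projK_mk, projK_mk]

lemma exists_compatible_family
    (hsame : ∀ (Q : Type u) [Group Q] [Finite Q],
      (∃ f : G₁ →* Q, Function.Surjective f) ↔ (∃ f : G₂ →* Q, Function.Surjective f))
    (hfg₁ : Group.FG G₁) (hfg₂ : Group.FG G₂) :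
    ∃ e : ∀ n : ℕ, (G₁ ⧸ KK G₁ n) ≃* (G₂ ⧸ KK G₂ n),
      ∀ (m n : ℕ) (h : m ≤ n) (x : G₁ ⧸ KK G₁ n), e m (projK h x) = projK h (e n x) := by
  haveI inst1 : ∀ j : ℕᵒᵖ, Finite ((levelF G₁ G₂).obj j) := by
    intro j
    haveI := KK_finiteIndex hfg₁ j.unop
    haveI := KK_finiteIndex hfg₂ j.unop
    show Finite ((G₁ ⧸ KK G₁ j.unop) ≃* (G₂ ⧸ KK G₂ j.unop))
    exact Finite.of_injective
      (fun e => (e : (G₁ ⧸ KK G₁ j.unop) → G₂ ⧸ KK G₂ j.unop)) DFunLike.coe_injective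
  haveI inst2 : ∀ j : ℕᵒᵖ, Nonempty ((levelF G₁ G₂).obj j) := fun j =>
    exists_level_iso hsame hfg₁ hfg₂ j.unop
  obtain ⟨u, hu⟩ := nonempty_sections_of_finite_inverse_system (levelF G₁ G₂)
  refine ⟨fun n => u (Opposite.op n), ?_⟩
  intro m n h x
  have h2 := hu ((homOfLE h).op : Opposite.op n ⟶ Opposite.op m)
  have h3 : descend h (u (Opposite.op n)) = u (Opposite.op m) := h2
  simpa only [← h3] using descend_comm h (u (Opposite.op n)) x

end Descend
section Main

variable {G₁ G₂ : Type u} [Group G₁] [Group G₂]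

/-- The `n`-th level subgroup as an element of `FinNormal`. -/
def KF {G : Type u} [Group G] (hfi : ∀ n, (KK G n).FiniteIndex) (n : ℕ) : FinNormal G :=
  ⟨KK G n, KK_normal n, hfi n⟩

lemma hle2 (M : FinNormal G₂) : KK G₂ M.1.index ≤ M.1 :=
  KK_le ⟨M.2.1, M.2.2, le_rfl⟩

lemma x_compat (x : ProfiniteCompletion G₁) (N M : FinNormal G₁) (h : N.1 ≤ M.1) :
    QuotientGroup.map N.1 M.1 (MonoidHom.id G₁) (fun _ hx => h hx) (x.1 N) = x.1 M :=
  x.2 N M h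

lemma x_proj (hfi₁ : ∀ n, (KK G₁ n).FiniteIndex) (x : ProfiniteCompletion G₁)
    {m n : ℕ} (h : m ≤ n) :
    x.1 (KF hfi₁ m) = projK h (x.1 (KF hfi₁ n)) :=
  (x.2 (KF hfi₁ n) (KF hfi₁ m) (KK_mono h)).symm

variable (e : ∀ n : ℕ, (G₁ ⧸ KK G₁ n) ≃* (G₂ ⧸ KK G₂ n))
variable (hfi₁ : ∀ n, (KK G₁ n).FiniteIndex)

/-- The component of the induced map on profinite completions. -/
noncomputable def PhiFun (x : ProfiniteCompletion G₁) (M : FinNormal G₂) : G₂ ⧸ M.1 :=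
  QuotientGroup.map (KK G₂ M.1.index) M.1 (MonoidHom.id G₂) (fun _ hx => hle2 M hx)
    (e M.1.index (x.1 (KF hfi₁ M.1.index)))

variable (he : ∀ (m n : ℕ) (h : m ≤ n) (x : G₁ ⧸ KK G₁ n), e m (projK h x) = projK h (e n x))

include he in
lemma PhiFun_eval (x : ProfiniteCompletion G₁) (M : FinNormal G₂) {n : ℕ}
    (hn : M.1.index ≤ n) :
    PhiFun e hfi₁ x M = QuotientGroup.map (KK G₂ n) M.1 (MonoidHom.id G₂)
      (fun _ hx => hle2 M (KK_mono hn hx)) (e n (x.1 (KF hfi₁ n))) := by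
  obtain ⟨y, hy⟩ := QuotientGroup.mk_surjective (e n (x.1 (KF hfi₁ n)))
  have h2 : e M.1.index (x.1 (KF hfi₁ M.1.index)) = ((y : G₂) : G₂ ⧸ KK G₂ M.1.index) := by
    erw [x_proj hfi₁ x hn, he _ _ hn, ← hy, projK_mk]
  erw [PhiFun, h2, ← hy, QuotientGroup.map_mk]

include he in
lemma PhiFun_mem (x : ProfiniteCompletion G₁) :
    (fun M => PhiFun e hfi₁ x M) ∈ profiniteCompletionSubgroup G₂ := by
  show ∀ (N M : FinNormal G₂) (h : N.1 ≤ M.1),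
    QuotientGroup.map N.1 M.1 (MonoidHom.id G₂) (fun _ hx => h hx) (PhiFun e hfi₁ x N)
      = PhiFun e hfi₁ x M
  intro N M h
  rw [PhiFun_eval e hfi₁ he x N (le_max_left N.1.index M.1.index),
    PhiFun_eval e hfi₁ he x M (le_max_right N.1.index M.1.index)]
  obtain ⟨y, hy⟩ := QuotientGroup.mk_surjective
    (e (max N.1.index M.1.index) (x.1 (KF hfi₁ (max N.1.index M.1.index))))
  erw [← hy, QuotientGroup.map_mk]

/-- The induced homomorphism on profinite completions. -/
noncomputable def PhiHom : ProfiniteCompletion G₁ →* ProfiniteCompletion G₂ :=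
  MonoidHom.codRestrict
    (Pi.monoidHom fun M : FinNormal G₂ =>
      (QuotientGroup.map (KK G₂ M.1.index) M.1 (MonoidHom.id G₂)
          (fun _ hx => hle2 M hx)).comp
        ((e M.1.index).toMonoidHom.comp
          ((Pi.evalMonoidHom (fun N : FinNormal G₁ => G₁ ⧸ N.1) (KF hfi₁ M.1.index)).comp
            (profiniteCompletionSubgroup G₁).subtype)))
    (profiniteCompletionSubgroup G₂)
    (fun x => PhiFun_mem e hfi₁ he x)

lemma PhiHom_apply (x : ProfiniteCompletion G₁) (M : FinNormal G₂) :
    (PhiHom e hfi₁ he x).1 M = PhiFun e hfi₁ x M := rfl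

lemma PhiHom_continuous : Continuous (PhiHom e hfi₁ he) := by
  apply Continuous.subtype_mk
  apply continuous_pi
  intro M
  have h1 : Continuous fun z : G₁ ⧸ (KF hfi₁ M.1.index).1 =>
      QuotientGroup.map (KK G₂ M.1.index) M.1 (MonoidHom.id G₂)
        (fun _ hx => hle2 M hx) (e M.1.index z) := continuous_of_discreteTopology
  exact h1.comp ((continuous_apply (KF hfi₁ M.1.index)).comp continuous_subtype_val)

end Main

section Inverse

variable {G₁ G₂ : Type u} [Group G₁] [Group G₂]
variable (e₁₂ : ∀ n : ℕ, (G₁ ⧸ KK G₁ n) ≃* (G₂ ⧸ KK G₂ n))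
variable (e₂₁ : ∀ n : ℕ, (G₂ ⧸ KK G₂ n) ≃* (G₁ ⧸ KK G₁ n))
variable (hfi₁ : ∀ n, (KK G₁ n).FiniteIndex) (hfi₂ : ∀ n, (KK G₂ n).FiniteIndex)
variable (he₁₂ : ∀ (m n : ℕ) (h : m ≤ n) (x : G₁ ⧸ KK G₁ n),
  e₁₂ m (projK h x) = projK h (e₁₂ n x))
variable (he₂₁ : ∀ (m n : ℕ) (h : m ≤ n) (x : G₂ ⧸ KK G₂ n),
  e₂₁ m (projK h x) = projK h (e₂₁ n x))
lemma Psi_Phi (hinv : ∀ (n : ℕ) (z : G₁ ⧸ KK G₁ n), e₂₁ n (e₁₂ n z) = z)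
    (x : ProfiniteCompletion G₁) :
    PhiHom e₂₁ hfi₂ he₂₁ (PhiHom e₁₂ hfi₁ he₁₂ x) = x := by
  apply Subtype.ext
  funext N
  set n := N.1.index with hn
  set q := max n ((KF hfi₂ n).1.index) with hq
  have hnq : n ≤ q := le_max_left _ _
  obtain ⟨g, hg⟩ := QuotientGroup.mk_surjective (x.1 (KF hfi₁ q))
  obtain ⟨y, hy⟩ := QuotientGroup.mk_surjective (e₁₂ q (x.1 (KF hfi₁ q)))
  -- Step 1 : the component of `Phi x` at level n is `y`
  have step1 : (PhiHom e₁₂ hfi₁ he₁₂ x).1 (KF hfi₂ n) = ((y : G₂) : G₂ ⧸ KK G₂ n) := by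
    erw [PhiHom_apply, PhiFun_eval e₁₂ hfi₁ he₁₂ x (KF hfi₂ n) (le_max_right _ _), ← hy,
      QuotientGroup.map_mk]
    rfl
  -- Step 2: compute the N component of Psi (Phi x)
  have step2 : (PhiHom e₂₁ hfi₂ he₂₁ (PhiHom e₁₂ hfi₁ he₁₂ x)).1 N
      = QuotientGroup.map (KK G₁ n) N.1 (MonoidHom.id G₁) (fun _ hx => hle2 N hx)
        (e₂₁ n ((PhiHom e₁₂ hfi₁ he₁₂ x).1 (KF hfi₂ n))) := rfl
  have step3 : e₂₁ n (((y : G₂) : G₂ ⧸ KK G₂ n)) = ((g : G₁) : G₁ ⧸ KK G₁ n) := by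
    have h1 : ((y : G₂) : G₂ ⧸ KK G₂ n) = projK hnq ((y : G₂) : G₂ ⧸ KK G₂ q) :=
      (projK_mk hnq y).symm
    erw [h1, he₂₁ _ _ hnq, hy, hinv, ← hg, projK_mk]
  have step4 : x.1 N = QuotientGroup.map (KK G₁ n) N.1 (MonoidHom.id G₁)
      (fun _ hx => hle2 N hx) (((g : G₁) : G₁ ⧸ KK G₁ n)) := by
    have h2 : x.1 (KF hfi₁ n) = ((g : G₁) : G₁ ⧸ KK G₁ n) := by
      erw [x_proj hfi₁ x hnq, ← hg, projK_mk]
    have h3 := x.2 (KF hfi₁ n) N (fun _ hx => hle2 N hx)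
    rw [← h3, h2]
    rfl
  rw [step2, step1, step3, ← step4]

end Inverse

/-- Finitely generated groups with the same finite quotients have
isomorphic (as topological groups) profinite completions. -/
theorem profiniteCompletion_isomorphic_of_same_finite_quotients
    (G₁ G₂ : Type u) [Group G₁] [Group G₂]
    (hfg₁ : Group.FG G₁) (hfg₂ : Group.FG G₂)
    (hsame : ∀ (Q : Type u) [Group Q] [Finite Q],
      (∃ f : G₁ →* Q, Function.Surjective f) ↔ (∃ f : G₂ →* Q, Function.Surjective f)) :
    ∃ e : ProfiniteCompletion G₁ ≃* ProfiniteCompletion G₂,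
      Continuous e ∧ Continuous e.symm := by
  obtain ⟨e, he⟩ := exists_compatible_family hsame hfg₁ hfg₂
  have hfi₁ : ∀ n, (KK G₁ n).FiniteIndex := fun n => KK_finiteIndex hfg₁ n
  have hfi₂ : ∀ n, (KK G₂ n).FiniteIndex := fun n => KK_finiteIndex hfg₂ n
  have he' : ∀ (m n : ℕ) (h : m ≤ n) (x : G₂ ⧸ KK G₂ n),
      (e m).symm (projK h x) = projK h ((e n).symm x) := by
    intro m n h x
    have h1 := he m n h ((e n).symm x)
    rw [MulEquiv.apply_symm_apply] at h1
    calc (e m).symm (projK h x) = (e m).symm (e m (projK h ((e n).symm x))) := by rw [h1]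
      _ = projK h ((e n).symm x) := (e m).symm_apply_apply _
  refine ⟨MonoidHom.toMulEquiv (PhiHom e hfi₁ he) (PhiHom (fun n => (e n).symm) hfi₂ he')
    ?_ ?_, ?_, ?_⟩
  · exact MonoidHom.ext fun x => Psi_Phi e (fun n => (e n).symm) hfi₁ hfi₂ he he'
      (fun n z => MulEquiv.symm_apply_apply (e n) z) x
  · exact MonoidHom.ext fun y => Psi_Phi (fun n => (e n).symm) e hfi₂ hfi₁ he' he
      (fun n z => MulEquiv.apply_symm_apply (e n) z) y
  · exact PhiHom_continuous e hfi₁ he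
  · exact PhiHom_continuous (fun n => (e n).symm) hfi₂ he'

end ProfinitePaper
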